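/- Let d be a C₀-translation invariant metric on an abelian group E. Then for every x,y ∈ E the limit δ(x,y) = lim_{n→∞} d(n•x, n•y)/n exists, and δ(x,y) ≤ d(x,y) + 2C₀. -/
import Mathlib


theorem stmt2 {E : Type*} [AddCommGroup E] (d : E → E → ℝ) (C₀ : ℝ) (hC₀ : 0 ≤ C₀)
    (hnonneg : ∀ x y, 0 ≤ d x y)
    (hsymm : ∀ x y, d x y = d y x)
    (htri : ∀ x y z, d x z ≤ d x y + d y z)
    (htrans : ∀ x y z, d (x + z) (y + z) ≤ d x y + C₀) :
    ∀ x y : E, ∃ L : ℝ,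
      Filter.Tendsto (fun n : ℕ => d (n • x) (n • y) / n) Filter.atTop (nhds L) ∧
      L ≤ d x y + 2 * C₀ := by
  intro x y
  set u : ℕ → ℝ := fun n => d (n • x) (n • y) + 2 * C₀ with hu
  have hsub : Subadditive u := by
    intro m n
    have h1 : d ((m + n) • x) (m • x + n • y) ≤ d (n • x) (n • y) + C₀ := by
      have := htrans (n • x) (n • y) (m • x)
      simpa [add_smul, add_comm, add_left_comm] using this
    have h2 : d (m • x + n • y) ((m + n) • y) ≤ d (m • x) (m • y) + C₀ := by
      have := htrans (m • x) (m • y) (n • y)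
      simpa [add_smul, add_comm, add_left_comm] using this
    have := (htri ((m + n) • x) (m • x + n • y) ((m + n) • y)).trans
      (add_le_add h1 h2)
    simp only [hu]
    linarith
  have hbdd : BddBelow (Set.range fun n => u n / n) := by
    refine ⟨0, ?_⟩
    rintro _ ⟨n, rfl⟩
    exact div_nonneg (by simp only [hu]; have := hnonneg (n • x) (n • y); linarith) (Nat.cast_nonneg n)
  have htend := hsub.tendsto_lim hbdd
  refine ⟨hsub.lim, ?_, ?_⟩
  · have h2 : Filter.Tendsto (fun n : ℕ => 2 * C₀ / n) Filter.atTop (nhds 0) :=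
      tendsto_const_div_atTop_nhds_zero_nat (2 * C₀)
    have := htend.sub h2
    have heq : (fun n : ℕ => u n / n - 2 * C₀ / n) = fun n : ℕ => d (n • x) (n • y) / n := by
      funext n
      rw [add_div]; ring
    rw [heq, sub_zero] at this
    exact this
  · have := hsub.lim_le_div hbdd (n := 1) one_ne_zero
    simpa [hu] using this
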